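/- arXiv:2407.06734 — 2 statements merged into one kernel-verified Lean document; each statement's English description precedes it below -/
import Mathlib

section
/- Let a ≥ b ≥ 0 and N ∈ ℕ with N ≥ a, and define g_N : ℝ → ℝ by g_N = a·1_{(−∞,−1)} + N·1_{[−1,1)} + b·1_{[1,∞)}. Then Var(g_N) = 2N − a − b and Var(M g_N) = 2N − a − (a+b)/2. -/
open MeasureTheory

/-- Total variation over ℝ of a real-valued function. -/
noncomputable def totalVar (g : ℝ → ℝ) : ENNReal :=
  ⨆ φ : {φ : ℤ → ℝ // Monotone φ},
    ∑' m : ℤ, ENNReal.ofReal |g (φ.1 (m + 1)) - g (φ.1 m)|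

/-- The centered Hardy–Littlewood maximal operator on ℝ. -/
noncomputable def cHL (g : ℝ → ℝ) (x : ℝ) : ℝ :=
  ⨆ r : {r : ℝ // 0 < r}, (1 / (2 * r.1)) * ∫ t in (x - r.1)..(x + r.1), |g t|

lemma int_sum_succ (i n : ℤ) (hn : i ≤ n) (f : ℤ → ℝ) :
    ∑ m ∈ Finset.Ico i (n+1), f m = ∑ m ∈ Finset.Ico i n, f m + f n := by
  have : Finset.Ico i (n+1) = insert n (Finset.Ico i n) := by
    rw [Finset.Ico_insert_right hn]; ext m; simp [Finset.mem_Ico, Finset.mem_Icc]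
  rw [this, Finset.sum_insert Finset.right_notMem_Ico, add_comm]

lemma sum_abs_ind (f : ℝ → ℝ) (c S m₁ m₂ : ℝ)
    (h1 : ∀ x y, x ≤ y → y < c → f x ≤ f y)
    (h2 : ∀ x y, c ≤ x → x ≤ y → f y ≤ f x)
    (hS : ∀ x, f x ≤ S)
    (hm1 : ∀ x, x < c → m₁ ≤ f x)
    (hm2 : ∀ x, c ≤ x → m₂ ≤ f x)
    (φ : ℤ → ℝ) (hφ : Monotone φ) (i : ℤ) :
    ∀ j, i ≤ j →
      (φ j < c → ∑ m ∈ Finset.Ico i j, |f (φ (m+1)) - f (φ m)| ≤ f (φ j) - m₁) ∧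
      (c ≤ φ j → ∑ m ∈ Finset.Ico i j, |f (φ (m+1)) - f (φ m)| ≤ (S - m₁) + (S - f (φ j))) := by
  refine Int.le_induction ?_ ?_
  · simp only [Finset.Ico_self, Finset.sum_empty]
    constructor
    · intro h; have := hm1 _ h; linarith
    · intro h
      have := hm2 _ h
      have := hS (φ i)
      have := hm1 (c-1) (by linarith)
      have := hS (c-1)
      linarith
  · intro n hn ih
    have hsum : ∑ m ∈ Finset.Ico i (n+1), |f (φ (m+1)) - f (φ m)|
        = ∑ m ∈ Finset.Ico i n, |f (φ (m+1)) - f (φ m)| + |f (φ (n+1)) - f (φ n)| :=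
      int_sum_succ i n hn _
    have hmono : φ n ≤ φ (n+1) := hφ (by omega)
    constructor
    · intro hlt
      have hn' : φ n < c := lt_of_le_of_lt hmono hlt
      have hfle : f (φ n) ≤ f (φ (n+1)) := h1 _ _ hmono hlt
      have := ih.1 hn'
      rw [hsum, abs_of_nonneg (by linarith)]
      linarith
    · intro hge
      rcases lt_or_ge (φ n) c with hn' | hn'
      · have h1' := ih.1 hn'
        have hS1 := hS (φ n)
        have hS2 := hS (φ (n+1))
        have hm1' := hm1 _ hn'
        rcases le_total (f (φ n)) (f (φ (n+1))) with hc | hc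
        · rw [hsum, abs_of_nonneg (by linarith)]; linarith
        · rw [hsum, abs_of_nonpos (by linarith)]; linarith
      · have h2' := ih.2 hn'
        have hfle : f (φ (n+1)) ≤ f (φ n) := h2 _ _ hn' hmono
        rw [hsum, abs_of_nonpos (by linarith)]
        linarith

lemma totalVar_le_unimodal (f : ℝ → ℝ) (c S m₁ m₂ : ℝ)
    (h1 : ∀ x y, x ≤ y → y < c → f x ≤ f y)
    (h2 : ∀ x y, c ≤ x → x ≤ y → f y ≤ f x)
    (hS : ∀ x, f x ≤ S)
    (hm1 : ∀ x, x < c → m₁ ≤ f x)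
    (hm2 : ∀ x, c ≤ x → m₂ ≤ f x) :
    totalVar f ≤ ENNReal.ofReal ((S - m₁) + (S - m₂)) := by
  have hm1S : m₁ ≤ S := le_trans (hm1 (c-1) (by linarith)) (hS _)
  have hm2S : m₂ ≤ S := le_trans (hm2 c le_rfl) (hS _)
  have key : ∀ (φ : ℤ → ℝ), Monotone φ → ∀ i j : ℤ,
      ∑ m ∈ Finset.Ico i j, |f (φ (m+1)) - f (φ m)| ≤ (S - m₁) + (S - m₂) := by
    intro φ hφ i j
    rcases le_or_gt i j with hij | hij
    · have H := sum_abs_ind f c S m₁ m₂ h1 h2 hS hm1 hm2 φ hφ i j hij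
      rcases lt_or_ge (φ j) c with hc | hc
      · have := H.1 hc
        have := hS (φ j)
        linarith
      · have := H.2 hc
        have := hm2 _ hc
        linarith
    · rw [Finset.Ico_eq_empty (by omega), Finset.sum_empty]
      linarith
  apply iSup_le
  rintro ⟨φ, hφ⟩
  rw [ENNReal.tsum_eq_iSup_sum]
  apply iSup_le; intro s
  rcases s.eq_empty_or_nonempty with rfl | hs
  · simp
  set i := s.min' hs
  set j := s.max' hs
  have hsub : s ⊆ Finset.Ico i (j+1) := by
    intro m hm
    exact Finset.mem_Ico.2 ⟨s.min'_le m hm, by have := s.le_max' m hm; omega⟩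
  calc ∑ m ∈ s, ENNReal.ofReal |f (φ (m+1)) - f (φ m)|
      ≤ ∑ m ∈ Finset.Ico i (j+1), ENNReal.ofReal |f (φ (m+1)) - f (φ m)| :=
        Finset.sum_le_sum_of_subset hsub
    _ = ENNReal.ofReal (∑ m ∈ Finset.Ico i (j+1), |f (φ (m+1)) - f (φ m)|) := by
        rw [ENNReal.ofReal_sum_of_nonneg (fun m _ => abs_nonneg _)]
    _ ≤ _ := ENNReal.ofReal_le_ofReal (key φ hφ i (j+1))

lemma totalVar_ge3 (f : ℝ → ℝ) (x₀ x₁ x₂ : ℝ) (h01 : x₀ ≤ x₁) (h12 : x₁ ≤ x₂) :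
    ENNReal.ofReal (|f x₁ - f x₀| + |f x₂ - f x₁|) ≤ totalVar f := by
  set φ : ℤ → ℝ := fun m => if m ≤ 0 then x₀ else if m = 1 then x₁ else x₂ with hφdef
  have hφ : Monotone φ := by
    intro p q hpq
    simp only [hφdef]
    split_ifs <;> first | linarith | (exfalso; omega)
  refine le_trans ?_ (le_iSup (fun ψ : {ψ : ℤ → ℝ // Monotone ψ} =>
    ∑' m : ℤ, ENNReal.ofReal |f (ψ.1 (m + 1)) - f (ψ.1 m)|) ⟨φ, hφ⟩)
  rw [tsum_eq_sum (s := ({0, 1} : Finset ℤ)) ?_]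
  · have e0 : φ 0 = x₀ := by simp [hφdef]
    have e1 : φ 1 = x₁ := by norm_num [hφdef]
    have e2 : φ 2 = x₂ := by norm_num [hφdef]
    rw [Finset.sum_insert (by norm_num), Finset.sum_singleton]
    norm_num [e0, e1, e2]
    rw [ENNReal.ofReal_add (abs_nonneg _) (abs_nonneg _)]
  · intro m hm
    simp only [Finset.mem_insert, Finset.mem_singleton] at hm
    push_neg at hm
    have : φ (m+1) = φ m := by
      simp only [hφdef]
      split_ifs <;> first | rfl | (exfalso; omega)
    simp [this]

lemma indicator_intervalIntegrable (c u v : ℝ) :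
    IntervalIntegrable ((Set.Ici c).indicator (fun _ => (1:ℝ))) volume u v := by
  rw [intervalIntegrable_iff]
  exact (integrableOn_const measure_Ioc_lt_top.ne).indicator measurableSet_Ici

lemma indicator_interval_integral (c u v : ℝ) (huv : u ≤ v) :
    ∫ t in u..v, (Set.Ici c).indicator (fun _ => (1:ℝ)) t = max v c - max u c := by
  rw [intervalIntegral.integral_of_le huv, setIntegral_indicator measurableSet_Ici,
    setIntegral_const, smul_eq_mul, mul_one]
  rcases le_total c u with h | h
  · have hs : Set.Ioc u v ∩ Set.Ici c = Set.Ioc u v := by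
      apply Set.inter_eq_left.2
      intro t ht
      exact le_trans h (le_of_lt ht.1)
    rw [hs, measureReal_def, Real.volume_Ioc, ENNReal.toReal_ofReal (by linarith),
      max_eq_left (le_trans h huv), max_eq_left h]
  · rcases le_total c v with h' | h'
    · have h1 : Set.Ioc c v ⊆ Set.Ioc u v ∩ Set.Ici c := by
        intro t ht
        exact ⟨⟨lt_of_le_of_lt h ht.1, ht.2⟩, le_of_lt ht.1⟩
      have h2 : Set.Ioc u v ∩ Set.Ici c ⊆ Set.Icc c v := by
        intro t ht
        exact ⟨ht.2, ht.1.2⟩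
      have hv : volume (Set.Ioc u v ∩ Set.Ici c) = ENNReal.ofReal (v - c) := by
        apply le_antisymm
        · exact le_trans (measure_mono h2) (le_of_eq (Real.volume_Icc))
        · exact le_trans (le_of_eq (Real.volume_Ioc).symm) (measure_mono h1)
      rw [measureReal_def, hv, ENNReal.toReal_ofReal (by linarith), max_eq_left h', max_eq_right h]
    · have h2 : Set.Ioc u v ∩ Set.Ici c ⊆ Set.Icc c v := fun t ht => ⟨ht.2, ht.1.2⟩
      have hv : volume (Set.Ioc u v ∩ Set.Ici c) = 0 := by
        apply le_antisymm _ (zero_le)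
        refine le_trans (measure_mono h2) ?_
        rw [Real.volume_Icc]
        simp [ENNReal.ofReal_eq_zero.2 (by linarith : v - c ≤ 0)]
      rw [measureReal_def, hv, ENNReal.toReal_zero, max_eq_right h', max_eq_right (le_trans huv h')]
      ring

lemma g_intervalIntegral (a b Nr : ℝ) (g : ℝ → ℝ)
    (hgdef : ∀ x : ℝ, g x = if x < -1 then a else if x < 1 then Nr else b)
    (u v : ℝ) (huv : u ≤ v) :
    ∫ t in u..v, g t = a*(v-u) + (Nr-a)*(max v (-1) - max u (-1)) + (b-Nr)*(max v 1 - max u 1) := by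
  have hrepr : ∀ t : ℝ, g t = a + (Nr - a) * (Set.Ici (-1:ℝ)).indicator (fun _ => (1:ℝ)) t
      + (b - Nr) * (Set.Ici (1:ℝ)).indicator (fun _ => (1:ℝ)) t := by
    intro t
    rw [hgdef]
    by_cases h1 : t < -1 <;> by_cases h2 : t < 1 <;>
      simp only [Set.indicator_apply, Set.mem_Ici, if_pos, if_neg, h1, h2, if_true, if_false] <;>
      [skip; skip; skip; skip] <;>
      first
        | (rw [if_neg (by linarith), if_neg (by linarith)]; ring)
        | (rw [if_pos (by linarith), if_neg (by linarith)]; ring)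
        | (exfalso; linarith)
        | (rw [if_pos (by linarith), if_pos (by linarith)]; ring)
  rw [intervalIntegral.integral_congr (fun t _ => hrepr t)]
  have i1 := indicator_intervalIntegrable (-1 : ℝ) u v
  have i2 := indicator_intervalIntegrable (1 : ℝ) u v
  rw [intervalIntegral.integral_add (intervalIntegrable_const.add (i1.const_mul _))
      (i2.const_mul _),
    intervalIntegral.integral_add intervalIntegrable_const (i1.const_mul _),
    intervalIntegral.integral_const_mul, intervalIntegral.integral_const_mul,
    intervalIntegral.integral_const, indicator_interval_integral _ _ _ huv,
    indicator_interval_integral _ _ _ huv, smul_eq_mul]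
  ring

lemma cHL_formula (a b Nr : ℝ) (hb : 0 ≤ b) (hab : b ≤ a) (hNa : a ≤ Nr)
    (g : ℝ → ℝ) (hgdef : ∀ x : ℝ, g x = if x < -1 then a else if x < 1 then Nr else b) (x : ℝ) :
    cHL g x = if x ≤ -1 then (Nr - a*x)/(1-x) else if x < 1 then Nr
              else max ((Nr + b*x)/(x+1)) ((a+b)/2) := by
  unfold cHL
  have habs : ∀ t, |g t| = g t := fun t => abs_of_nonneg (by rw [hgdef]; split_ifs <;> linarith)
  have hF : ∀ r : ℝ, 0 < r → (∫ t in (x-r)..(x+r), |g t|)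
      = a*((x+r)-(x-r)) + (Nr-a)*(max (x+r) (-1) - max (x-r) (-1))
        + (b-Nr)*(max (x+r) 1 - max (x-r) 1) := by
    intro r hr
    rw [show (∫ t in (x-r)..(x+r), |g t|) = ∫ t in (x-r)..(x+r), g t from
      intervalIntegral.integral_congr (fun t _ => habs t)]
    exact g_intervalIntegral a b Nr g hgdef _ _ (by linarith)
  set H := if x ≤ -1 then (Nr - a*x)/(1-x) else if x < 1 then Nr
              else max ((Nr + b*x)/(x+1)) ((a+b)/2) with hH
  have key_le : ∀ r : {r : ℝ // 0 < r},
      (1/(2*r.1)) * ∫ t in (x-r.1)..(x+r.1), |g t| ≤ H := by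
    rintro ⟨r, hr⟩
    simp only
    rw [hF r hr, hH]
    split_ifs with hx1 hx2
    · -- x ≤ -1
      rw [one_div_mul_eq_div, div_le_div_iff₀ (by linarith) (by linarith)]
      rw [max_eq_right (by linarith : x - r ≤ (-1:ℝ)), max_eq_right (by linarith : x - r ≤ (1:ℝ))]
      rcases le_total (x+r) (-1:ℝ) with hv | hv
      · rw [max_eq_right hv, max_eq_right (by linarith : x + r ≤ (1:ℝ))]
        nlinarith [mul_nonneg hr.le (by linarith : (0:ℝ) ≤ Nr - a)]
      · rw [max_eq_left hv]
        rcases le_total (x+r) (1:ℝ) with hv2 | hv2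
        · rw [max_eq_right hv2]
          nlinarith [mul_nonneg (mul_nonneg (by linarith : (0:ℝ) ≤ Nr - a)
            (by linarith : (0:ℝ) ≤ -1 - x)) (by linarith : (0:ℝ) ≤ (1 - x) - r)]
        · rw [max_eq_left hv2]
          have hE : (0:ℝ) ≤ 2*Nr - 2*b + (a - b)*(-1 - x) := by
            nlinarith [mul_nonneg (by linarith : (0:ℝ) ≤ a - b) (by linarith : (0:ℝ) ≤ -1 - x)]
          nlinarith [mul_nonneg (by linarith : (0:ℝ) ≤ r - 1 + x) hE]
    · -- -1 < x < 1
      rw [one_div_mul_eq_div, div_le_iff₀ (by linarith)]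
      have d1b : max (x+r) (-1:ℝ) - max (x-r) (-1) ≤ (x+r) - (x-r) := by
        rcases le_total (x-r) (-1:ℝ) with h | h <;> rcases le_total (x+r) (-1:ℝ) with h' | h' <;>
          simp [max_eq_left, max_eq_right, h, h'] <;> linarith
      have d2a : max (x-r) (1:ℝ) ≤ max (x+r) 1 := max_le_max (by linarith) le_rfl
      nlinarith [mul_le_mul_of_nonneg_left d1b (by linarith : (0:ℝ) ≤ Nr - a),
        mul_nonneg (by linarith : (0:ℝ) ≤ Nr - b) (sub_nonneg.2 d2a)]
    · -- x ≥ 1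
      have hx : (1:ℝ) ≤ x := le_of_not_gt hx2
      rw [max_eq_left (by linarith : (-1:ℝ) ≤ x + r), max_eq_left (by linarith : (1:ℝ) ≤ x + r)]
      rcases le_total (1:ℝ) (x-r) with hu | hu
      · rw [max_eq_left (by linarith : (-1:ℝ) ≤ x - r), max_eq_left hu]
        refine le_trans ?_ (le_max_right _ _)
        rw [one_div_mul_eq_div, div_le_iff₀ (by linarith)]
        nlinarith [mul_nonneg hr.le (by linarith : (0:ℝ) ≤ a - b)]
      · rcases le_total (-1:ℝ) (x-r) with hu2 | hu2
        · rw [max_eq_left hu2, max_eq_right hu]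
          refine le_trans ?_ (le_max_left _ _)
          rw [one_div_mul_eq_div, div_le_div_iff₀ (by linarith) (by linarith)]
          nlinarith [mul_nonneg (mul_nonneg (by linarith : (0:ℝ) ≤ Nr - b)
            (by linarith : (0:ℝ) ≤ x - 1)) (by linarith : (0:ℝ) ≤ x + 1 - r)]
        · rw [max_eq_right hu2, max_eq_right (by linarith : x - r ≤ (1:ℝ))]
          rcases le_total ((Nr-a)*(x+1) + (b-Nr)*(x-1)) 0 with hK | hK
          · refine le_trans ?_ (le_max_right _ _)
            rw [one_div_mul_eq_div, div_le_iff₀ (by linarith)]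
            nlinarith
          · refine le_trans ?_ (le_max_left _ _)
            rw [one_div_mul_eq_div, div_le_div_iff₀ (by linarith) (by linarith)]
            nlinarith [mul_nonneg hK (by linarith : (0:ℝ) ≤ r - (x+1))]
  have bdd : BddAbove (Set.range fun r : {r : ℝ // 0 < r} =>
      (1/(2*r.1)) * ∫ t in (x-r.1)..(x+r.1), |g t|) := by
    refine ⟨H, ?_⟩
    rintro _ ⟨r, rfl⟩
    exact key_le r
  refine le_antisymm (ciSup_le key_le) ?_
  rw [hH]
  split_ifs with hx1 hx2
  · -- attained at r = 1 - x
    refine le_ciSup_of_le bdd ⟨1-x, by linarith⟩ ?_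
    simp only
    rw [hF _ (by linarith)]
    rw [show max (x + (1-x)) (-1:ℝ) = x + (1-x) from max_eq_left (by linarith),
      show max (x - (1-x)) (-1:ℝ) = -1 from max_eq_right (by linarith),
      show max (x + (1-x)) (1:ℝ) = 1 from max_eq_right (by linarith),
      show max (x - (1-x)) (1:ℝ) = 1 from max_eq_right (by linarith)]
    apply le_of_eq
    have h1x : (1:ℝ) - x ≠ 0 := by linarith
    field_simp
    ring
  · -- attained at r = min (x+1) (1-x)
    have hrpos : 0 < min (x+1) (1-x) := by
      apply lt_min <;> linarith
    refine le_ciSup_of_le bdd ⟨min (x+1) (1-x), hrpos⟩ ?_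
    simp only
    rw [hF _ hrpos]
    have hm1 : min (x+1) (1-x) ≤ x+1 := min_le_left _ _
    have hm2 : min (x+1) (1-x) ≤ 1-x := min_le_right _ _
    rw [show max (x + min (x+1) (1-x)) (-1:ℝ) = x + min (x+1) (1-x) from
        max_eq_left (by linarith),
      show max (x - min (x+1) (1-x)) (-1:ℝ) = x - min (x+1) (1-x) from
        max_eq_left (by linarith),
      show max (x + min (x+1) (1-x)) (1:ℝ) = 1 from max_eq_right (by linarith),
      show max (x - min (x+1) (1-x)) (1:ℝ) = 1 from max_eq_right (by linarith)]
    apply le_of_eq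
    have hne : min (x+1) (1-x) ≠ 0 := ne_of_gt hrpos
    field_simp
    ring
  · -- x ≥ 1
    have hx : (1:ℝ) ≤ x := le_of_not_gt hx2
    apply max_le
    · -- attained at r = x+1
      refine le_ciSup_of_le bdd ⟨x+1, by linarith⟩ ?_
      simp only
      rw [hF _ (by linarith)]
      rw [show max (x + (x+1)) (-1:ℝ) = x + (x+1) from max_eq_left (by linarith),
        show max (x - (x+1)) (-1:ℝ) = -1 from max_eq_right (by linarith),
        show max (x + (x+1)) (1:ℝ) = x + (x+1) from max_eq_left (by linarith),
        show max (x - (x+1)) (1:ℝ) = 1 from max_eq_right (by linarith)]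
      apply le_of_eq
      have h1x : x + 1 ≠ 0 := by linarith
      field_simp
      ring
    · -- limit as r → ∞
      apply le_of_forall_pos_le_add
      intro ε hε
      set K := (Nr-a)*(x+1) + (b-Nr)*(x-1) with hK
      set r := max (x+1) ((|K|+1)/(2*ε)) with hrdef
      have hrx : x + 1 ≤ r := le_max_left _ _
      have hrpos : 0 < r := by linarith
      have hre : (|K|+1)/(2*ε) ≤ r := le_max_right _ _
      have h2re : |K| + 1 ≤ 2*ε*r := by
        rw [div_le_iff₀ (by linarith)] at hre
        linarith [hre]
      have hKge : -K ≤ |K| := neg_le_abs K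
      have hfin : -((Nr-a)*(x+1) + (b-Nr)*(x-1)) ≤ 2*ε*r := by
        rw [← hK]; linarith
      have hA : (a+b)/2 - ε ≤ (1/(2*r)) * ∫ t in (x-r)..(x+r), |g t| := by
        rw [hF _ hrpos]
        rw [show max (x + r) (-1:ℝ) = x + r from max_eq_left (by linarith),
          show max (x - r) (-1:ℝ) = -1 from max_eq_right (by linarith),
          show max (x + r) (1:ℝ) = x + r from max_eq_left (by linarith),
          show max (x - r) (1:ℝ) = 1 from max_eq_right (by linarith)]
        rw [one_div_mul_eq_div, le_div_iff₀ (by linarith)]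
        nlinarith [hfin]
      have hle := le_ciSup bdd (⟨r, hrpos⟩ : {r : ℝ // 0 < r})
      simp only at hle
      linarith [le_trans hA hle]


theorem stmt8 (a b : ℝ) (N : ℕ) (hb : 0 ≤ b) (hab : b ≤ a) (hNa : a ≤ N)
    (g : ℝ → ℝ)
    (hgdef : ∀ x : ℝ, g x = if x < -1 then a else if x < 1 then (N : ℝ) else b) :
    totalVar g = ENNReal.ofReal (2 * N - a - b) ∧
      totalVar (cHL g) = ENNReal.ofReal (2 * N - a - (a + b) / 2) := by
  have hN0 : (0:ℝ) ≤ (N:ℝ) := Nat.cast_nonneg N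
  constructor
  · -- total variation of g
    apply le_antisymm
    · refine le_trans (totalVar_le_unimodal g 1 (N:ℝ) a b ?_ ?_ ?_ ?_ ?_)
        (le_of_eq (by congr 1; ring))
      · intro x y hxy hy; rw [hgdef, hgdef]; split_ifs <;> linarith
      · intro x y h1 h2; rw [hgdef, hgdef]; split_ifs <;> linarith
      · intro x; rw [hgdef]; split_ifs <;> linarith
      · intro x hx; rw [hgdef]; split_ifs <;> linarith
      · intro x hx; rw [hgdef]; split_ifs <;> linarith
    · have e1 : g (-2) = a := by rw [hgdef]; norm_num
      have e2 : g 0 = (N:ℝ) := by rw [hgdef]; norm_num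
      have e3 : g 2 = b := by rw [hgdef]; norm_num
      have hge := totalVar_ge3 g (-2) 0 2 (by norm_num) (by norm_num)
      rw [e1, e2, e3] at hge
      refine le_trans (le_of_eq ?_) hge
      rw [abs_of_nonneg (by linarith), abs_of_nonpos (by linarith)]
      congr 1
      ring
  · -- total variation of cHL g
    set f : ℝ → ℝ := fun x => if x ≤ -1 then ((N:ℝ) - a*x)/(1-x) else if x < 1 then (N:ℝ)
        else max (((N:ℝ) + b*x)/(x+1)) ((a+b)/2) with hf
    have hcg : cHL g = f := funext (fun x => cHL_formula a b (N:ℝ) hb hab hNa g hgdef x)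
    rw [hcg]
    -- basic estimates on the pieces
    have p1 : ∀ x : ℝ, x ≤ -1 → ((N:ℝ) - a*x)/(1-x) ≤ (N:ℝ) := by
      intro x hx
      rw [div_le_iff₀ (by linarith)]
      nlinarith [mul_nonneg (by linarith : (0:ℝ) ≤ (N:ℝ) - a) (by linarith : (0:ℝ) ≤ -x)]
    have p2 : ∀ x y : ℝ, x ≤ y → y ≤ -1 → ((N:ℝ) - a*x)/(1-x) ≤ ((N:ℝ) - a*y)/(1-y) := by
      intro x y hxy hy
      rw [div_le_div_iff₀ (by linarith) (by linarith)]
      nlinarith [mul_nonneg (by linarith : (0:ℝ) ≤ (N:ℝ) - a) (by linarith : (0:ℝ) ≤ y - x)]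
    have p3 : ∀ x : ℝ, x ≤ -1 → a ≤ ((N:ℝ) - a*x)/(1-x) := by
      intro x hx
      rw [le_div_iff₀ (by linarith)]
      nlinarith
    have p4 : ∀ x : ℝ, 1 ≤ x → ((N:ℝ) + b*x)/(x+1) ≤ (N:ℝ) := by
      intro x hx
      rw [div_le_iff₀ (by linarith)]
      nlinarith [mul_nonneg (by linarith : (0:ℝ) ≤ (N:ℝ) - b) (by linarith : (0:ℝ) ≤ x)]
    have p5 : ∀ x y : ℝ, 1 ≤ x → x ≤ y → ((N:ℝ) + b*y)/(y+1) ≤ ((N:ℝ) + b*x)/(x+1) := by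
      intro x y hx hxy
      rw [div_le_div_iff₀ (by linarith) (by linarith)]
      nlinarith [mul_nonneg (by linarith : (0:ℝ) ≤ (N:ℝ) - b) (by linarith : (0:ℝ) ≤ y - x)]
    have p6 : (a+b)/2 ≤ (N:ℝ) := by linarith
    apply le_antisymm
    · refine le_trans (totalVar_le_unimodal f 1 (N:ℝ) a ((a+b)/2) ?_ ?_ ?_ ?_ ?_)
        (le_of_eq (by congr 1; ring))
      · -- nondecreasing on (-∞, 1)
        intro x y hxy hy
        rw [hf]
        simp only
        split_ifs with h1 h2 h3 h3 h4 <;>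
          first
            | linarith
            | exact p2 x y hxy h2
            | exact p1 x h1
      · -- nonincreasing on [1, ∞)
        intro x y h1 h2
        rw [hf]
        simp only
        split_ifs <;>
          first
            | linarith
            | exact max_le_max (p5 x y (by linarith) h2) le_rfl
      · -- bounded by N
        intro x
        rw [hf]
        simp only
        split_ifs with h1 h2 <;>
          first
            | linarith
            | exact p1 x h1
            | exact max_le (p4 x (by linarith)) p6
      · -- lower bound a on (-∞, 1)
        intro x hx
        rw [hf]
        simp only
        split_ifs with h1 h2 <;>
          first
            | linarith
            | exact p3 x h1
      · -- lower bound (a+b)/2 on [1, ∞)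
        intro x hx
        rw [hf]
        simp only
        split_ifs with h1 h2 <;>
          first
            | linarith
            | exact le_max_right _ _
    · -- lower bound on the total variation of f
      apply ENNReal.le_of_forall_pos_le_add
      intro ε hε _
      have hεr : (0:ℝ) < (ε:ℝ) := hε
      set R : ℝ := max 1 (2*(N:ℝ)/(ε:ℝ)) with hR
      have hR1 : (1:ℝ) ≤ R := le_max_left _ _
      have hR2 : 2*(N:ℝ)/(ε:ℝ) ≤ R := le_max_right _ _
      have hR2' : 2*(N:ℝ) ≤ (ε:ℝ) * R := by
        rw [div_le_iff₀ hεr] at hR2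
        linarith
      have e0 : f 0 = (N:ℝ) := by
        rw [hf]; norm_num
      have em : f (-R) = ((N:ℝ) - a*(-R))/(1-(-R)) := by
        rw [hf]; simp only; rw [if_pos (by linarith : -R ≤ -1)]
      have ep : f R = max (((N:ℝ) + b*R)/(R+1)) ((a+b)/2) := by
        rw [hf]; simp only
        rw [if_neg (by linarith : ¬ R ≤ -1), if_neg (by linarith : ¬ R < 1)]
      have hfmle : f (-R) ≤ (N:ℝ) := by rw [em]; exact p1 _ (by linarith)
      have hfple : f R ≤ (N:ℝ) := by rw [ep]; exact max_le (p4 _ hR1) p6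
      have hfm : f (-R) ≤ a + (ε:ℝ)/2 := by
        rw [em, div_le_iff₀ (by linarith)]
        nlinarith
      have hfp : f R ≤ (a+b)/2 + (ε:ℝ)/2 := by
        rw [ep]
        apply max_le _ (by linarith)
        rw [div_le_iff₀ (by linarith)]
        nlinarith
      have hge := totalVar_ge3 f (-R) 0 R (by linarith) (by linarith)
      rw [e0, abs_of_nonneg (by linarith), abs_of_nonpos (by linarith)] at hge
      calc ENNReal.ofReal (2 * (N:ℝ) - a - (a + b) / 2)
          ≤ ENNReal.ofReal (((N:ℝ) - f (-R) + -(f R - (N:ℝ))) + (ε:ℝ)) := by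
            apply ENNReal.ofReal_le_ofReal
            linarith
        _ = ENNReal.ofReal ((N:ℝ) - f (-R) + -(f R - (N:ℝ))) + ENNReal.ofReal (ε:ℝ) := by
            rw [ENNReal.ofReal_add (by linarith) (by linarith)]
        _ ≤ totalVar f + ε := by
            apply add_le_add hge
            rw [ENNReal.ofReal_coe_nnreal]
end

section
/- Let G : ℤ → [0,∞) be of bounded variation and suppose the uncentered discrete maximal function M̃G has a local maximum at n ∈ ℤ, i.e., there exist n' < n < n'' with max{M̃G(n'), M̃G(n'')} < M̃G(n) = max{M̃G(y) : n' ≤ y ≤ n''}. Then M̃G(n) = G(n). -/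
noncomputable def varZ (G : ℤ → ℝ) : ENNReal :=
  ∑' n : ℤ, ENNReal.ofReal |G (n + 1) - G n|

noncomputable def uHL (G : ℤ → ℝ) (n : ℤ) : ℝ :=
  ⨆ p : ℕ × ℕ, (1 / ((p.1 : ℝ) + (p.2 : ℝ) + 1)) *
    ∑ y ∈ Finset.Icc (n - (p.1 : ℤ)) (n + (p.2 : ℤ)), G y

lemma varZ_step (G : ℤ → ℝ) (a : ℤ) (k : ℕ) :
    ENNReal.ofReal |G (a + k) - G a| ≤ varZ G := by
  have h1 : ∑ i ∈ Finset.range k, (G (a + i + 1) - G (a + i)) = G (a + k) - G a := by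
    have := Finset.sum_range_sub (fun i : ℕ => G (a + i)) k
    convert this using 2 with i
    · push_cast; ring_nf
    · simp
  have h2 : |G (a + k) - G a| ≤ ∑ i ∈ Finset.range k, |G (a + i + 1) - G (a + i)| := by
    rw [← h1]; exact Finset.abs_sum_le_sum_abs _ _
  calc ENNReal.ofReal |G (a + k) - G a|
      ≤ ENNReal.ofReal (∑ i ∈ Finset.range k, |G (a + i + 1) - G (a + i)|) :=
        ENNReal.ofReal_le_ofReal h2
    _ = ∑ i ∈ Finset.range k, ENNReal.ofReal |G (a + i + 1) - G (a + i)| := by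
        rw [ENNReal.ofReal_sum_of_nonneg]; intro i _; exact abs_nonneg _
    _ = ∑ m ∈ (Finset.range k).map ⟨fun i : ℕ => a + i, fun i j h => by exact_mod_cast add_left_cancel h⟩,
          ENNReal.ofReal |G (m + 1) - G m| := by
        rw [Finset.sum_map]; rfl
    _ ≤ varZ G := ENNReal.sum_le_tsum _

lemma G_bdd (G : ℤ → ℝ) (hBV : varZ G ≠ ⊤) : ∃ C, ∀ m, G m ≤ C := by
  refine ⟨G 0 + (varZ G).toReal, fun m => ?_⟩
  have key : ENNReal.ofReal |G m - G 0| ≤ varZ G := by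
    rcases le_or_gt 0 m with h | h
    · have := varZ_step G 0 m.toNat
      simpa [Int.toNat_of_nonneg h] using this
    · have h3 := varZ_step G m (-m).toNat
      have hm : m + ((-m).toNat : ℤ) = 0 := by omega
      rw [hm] at h3
      rwa [abs_sub_comm]
  have h2 : |G m - G 0| ≤ (varZ G).toReal := by
    have := ENNReal.toReal_mono hBV key
    rwa [ENNReal.toReal_ofReal (abs_nonneg _)] at this
  have := abs_le.mp h2
  linarith [this.2]

lemma avg_le_bound (G : ℤ → ℝ) (C : ℝ) (hC : ∀ m, G m ≤ C) (m : ℤ) (p : ℕ × ℕ) :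
    (1 / ((p.1 : ℝ) + (p.2 : ℝ) + 1)) *
      ∑ y ∈ Finset.Icc (m - (p.1 : ℤ)) (m + (p.2 : ℤ)), G y ≤ C := by
  have hcard : (Finset.Icc (m - (p.1:ℤ)) (m + (p.2:ℤ))).card = p.1 + p.2 + 1 := by
    rw [Int.card_Icc]; omega
  have hL : (0:ℝ) < (p.1:ℝ) + (p.2:ℝ) + 1 := by positivity
  have hsum : ∑ y ∈ Finset.Icc (m - (p.1:ℤ)) (m + (p.2:ℤ)), G y ≤ ((p.1:ℝ)+(p.2:ℝ)+1) * C := by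
    calc ∑ y ∈ Finset.Icc (m - (p.1:ℤ)) (m + (p.2:ℤ)), G y
        ≤ ∑ _y ∈ Finset.Icc (m - (p.1:ℤ)) (m + (p.2:ℤ)), C :=
          Finset.sum_le_sum (fun y _ => hC y)
      _ = ((p.1:ℝ)+(p.2:ℝ)+1)*C := by rw [Finset.sum_const, hcard]; push_cast; ring_nf
  calc (1 / ((p.1 : ℝ) + (p.2 : ℝ) + 1)) *
        ∑ y ∈ Finset.Icc (m - (p.1:ℤ)) (m + (p.2:ℤ)), G y
      ≤ (1 / ((p.1 : ℝ) + (p.2 : ℝ) + 1)) * (((p.1:ℝ)+(p.2:ℝ)+1) * C) :=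
        mul_le_mul_of_nonneg_left hsum (by positivity)
    _ = C := by field_simp

lemma uHL_bdd (G : ℤ → ℝ) (C : ℝ) (hC : ∀ m, G m ≤ C) (m : ℤ) :
    BddAbove (Set.range fun p : ℕ × ℕ => (1 / ((p.1 : ℝ) + (p.2 : ℝ) + 1)) *
      ∑ z ∈ Finset.Icc (m - (p.1 : ℤ)) (m + (p.2 : ℤ)), G z) :=
  ⟨C, by rintro _ ⟨p, rfl⟩; exact avg_le_bound G C hC m p⟩

lemma avg_le_uHL (G : ℤ → ℝ) (C : ℝ) (hC : ∀ m, G m ≤ C) (y a b : ℤ)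
    (ha : a ≤ y) (hb : y ≤ b) :
    (1 / ((b : ℝ) - (a:ℝ) + 1)) * ∑ z ∈ Finset.Icc a b, G z ≤ uHL G y := by
  have h := le_ciSup (uHL_bdd G C hC y) ((y - a).toNat, (b - y).toNat)
  simp only at h
  have e1 : y - ((y - a).toNat : ℤ) = a := by omega
  have e2 : y + ((b - y).toNat : ℤ) = b := by omega
  rw [e1, e2] at h
  have e3 : (((y - a).toNat : ℕ) : ℝ) + (((b - y).toNat : ℕ) : ℝ) + 1 = (b:ℝ) - (a:ℝ) + 1 := by
    have h1 : ((y - a).toNat : ℤ) = y - a := Int.toNat_of_nonneg (by omega)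
    have h2 : ((b - y).toNat : ℤ) = b - y := Int.toNat_of_nonneg (by omega)
    have h1' : (((y - a).toNat : ℕ) : ℝ) = (y:ℝ) - a := by
      exact_mod_cast congrArg (fun z : ℤ => (z:ℝ)) h1
    have h2' : (((b - y).toNat : ℕ) : ℝ) = (b:ℝ) - y := by
      exact_mod_cast congrArg (fun z : ℤ => (z:ℝ)) h2
    rw [h1', h2']; ring
  rw [e3] at h
  exact h

lemma self_le_uHL (G : ℤ → ℝ) (C : ℝ) (hC : ∀ m, G m ≤ C) (y : ℤ) :
    G y ≤ uHL G y := by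
  have := avg_le_uHL G C hC y y y le_rfl le_rfl
  simpa using this

theorem stmt11 (G : ℤ → ℝ) (hG : ∀ n, 0 ≤ G n) (hBV : varZ G ≠ ⊤)
    (n n' n'' : ℤ) (h1 : n' < n) (h2 : n < n'')
    (hmax : max (uHL G n') (uHL G n'') < uHL G n)
    (htop : ∀ y : ℤ, n' ≤ y → y ≤ n'' → uHL G y ≤ uHL G n) :
    uHL G n = G n := by
  obtain ⟨C, hC⟩ := G_bdd G hBV
  set f : ℕ × ℕ → ℝ := fun p => (1 / ((p.1 : ℝ) + (p.2 : ℝ) + 1)) *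
    ∑ y ∈ Finset.Icc (n - (p.1 : ℤ)) (n + (p.2 : ℤ)), G y with hf
  have huHL : uHL G n = ⨆ p, f p := rfl
  -- any interval whose average beats both endpoints lies strictly inside (n', n'')
  have conf : ∀ p : ℕ × ℕ, max (uHL G n') (uHL G n'') < f p →
      (p.1 : ℤ) < n - n' ∧ (p.2 : ℤ) < n'' - n := by
    intro p hp
    constructor
    · by_contra hcon
      push_neg at hcon
      have key := avg_le_uHL G C hC n' (n - (p.1:ℤ)) (n + (p.2:ℤ)) (by omega) (by omega)
      have ecoef : ((n + (p.2:ℤ) : ℤ) : ℝ) - ((n - (p.1:ℤ) : ℤ) : ℝ) + 1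
          = (p.1:ℝ) + (p.2:ℝ) + 1 := by push_cast; ring
      rw [ecoef] at key
      have h5 : uHL G n' ≤ max (uHL G n') (uHL G n'') := le_max_left _ _
      have h6 : f p = (1 / ((p.1 : ℝ) + (p.2 : ℝ) + 1)) *
          ∑ y ∈ Finset.Icc (n - (p.1 : ℤ)) (n + (p.2 : ℤ)), G y := rfl
      rw [h6] at hp
      linarith
    · by_contra hcon
      push_neg at hcon
      have key := avg_le_uHL G C hC n'' (n - (p.1:ℤ)) (n + (p.2:ℤ)) (by omega) (by omega)
      have ecoef : ((n + (p.2:ℤ) : ℤ) : ℝ) - ((n - (p.1:ℤ) : ℤ) : ℝ) + 1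
          = (p.1:ℝ) + (p.2:ℝ) + 1 := by push_cast; ring
      rw [ecoef] at key
      have h5 : uHL G n'' ≤ max (uHL G n') (uHL G n'') := le_max_right _ _
      have h6 : f p = (1 / ((p.1 : ℝ) + (p.2 : ℝ) + 1)) *
          ∑ y ∈ Finset.Icc (n - (p.1 : ℤ)) (n + (p.2 : ℤ)), G y := rfl
      rw [h6] at hp
      linarith
  set F : Finset (ℕ × ℕ) := Finset.range (n - n').toNat ×ˢ Finset.range (n'' - n).toNat with hF
  have memF : ∀ p : ℕ × ℕ, max (uHL G n') (uHL G n'') < f p → p ∈ F := by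
    intro p hp
    obtain ⟨c1, c2⟩ := conf p hp
    rw [hF, Finset.mem_product, Finset.mem_range, Finset.mem_range]
    omega
  obtain ⟨pw, hpw⟩ := exists_lt_of_lt_ciSup (huHL ▸ hmax)
  have hFne : F.Nonempty := ⟨pw, memF pw hpw⟩
  obtain ⟨p₀, hp₀F, hp₀max⟩ := F.exists_max_image f hFne
  have hp₀gt : max (uHL G n') (uHL G n'') < f p₀ :=
    lt_of_lt_of_le hpw (hp₀max pw (memF pw hpw))
  have hattain : f p₀ = uHL G n := by
    apply le_antisymm
    · exact le_ciSup (uHL_bdd G C hC n) p₀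
    · rw [huHL]
      apply ciSup_le
      intro p
      by_cases hcase : max (uHL G n') (uHL G n'') < f p
      · exact hp₀max p (memF p hcase)
      · push_neg at hcase
        exact hcase.trans (le_of_lt hp₀gt)
  obtain ⟨c1, c2⟩ := conf p₀ hp₀gt
  have hGle : ∀ y ∈ Finset.Icc (n - (p₀.1:ℤ)) (n + (p₀.2:ℤ)), G y ≤ uHL G n := by
    intro y hy
    rw [Finset.mem_Icc] at hy
    exact (self_le_uHL G C hC y).trans (htop y (by omega) (by omega))
  have hcard : (Finset.Icc (n - (p₀.1:ℤ)) (n + (p₀.2:ℤ))).card = p₀.1 + p₀.2 + 1 := by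
    rw [Int.card_Icc]; omega
  have hL : (0:ℝ) < (p₀.1:ℝ) + (p₀.2:ℝ) + 1 := by positivity
  have hS : ∑ y ∈ Finset.Icc (n - (p₀.1:ℤ)) (n + (p₀.2:ℤ)), G y
      = ((p₀.1:ℝ)+(p₀.2:ℝ)+1) * uHL G n := by
    have h := hattain
    have h6 : f p₀ = (1 / ((p₀.1 : ℝ) + (p₀.2 : ℝ) + 1)) *
        ∑ y ∈ Finset.Icc (n - (p₀.1 : ℤ)) (n + (p₀.2 : ℤ)), G y := rfl
    rw [h6] at h
    field_simp at h
    linarith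
  have hGn : G n ≤ uHL G n := self_le_uHL G C hC n
  by_contra hne
  have hlt : G n < uHL G n := lt_of_le_of_ne hGn (fun h => hne h.symm)
  have hmem : n ∈ Finset.Icc (n - (p₀.1:ℤ)) (n + (p₀.2:ℤ)) :=
    Finset.mem_Icc.mpr ⟨by omega, by omega⟩
  have hlt2 : ∑ y ∈ Finset.Icc (n - (p₀.1:ℤ)) (n + (p₀.2:ℤ)), G y
      < ∑ _y ∈ Finset.Icc (n - (p₀.1:ℤ)) (n + (p₀.2:ℤ)), uHL G n :=
    Finset.sum_lt_sum hGle ⟨n, hmem, hlt⟩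
  rw [Finset.sum_const, hcard, nsmul_eq_mul] at hlt2
  have hcast : ((p₀.1 + p₀.2 + 1 : ℕ):ℝ) = (p₀.1:ℝ)+(p₀.2:ℝ)+1 := by push_cast; ring
  rw [hcast] at hlt2
  linarith
end
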